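/- Let K be a field and α ∈ K with α ≠ 0. There exist scalars λ₀,λ₁,λ₂,λ₃ ∈ K, a commutative associative (not necessarily unital) K-algebra B equipped with a K-linear involution *, and K-linearly independent elements u,v ∈ B satisfying p(u,u) = u, p(v,v) = αu, p(u,v) = 0 and p(v,u) = 0, if and only if the characteristic of K is different from 2. (Equivalently: the evolution algebra A_{8,α}, with natural basis e₁,e₂, e₁e₂ = 0, e₁² = e₁, e₂² = αe₁, has a faithful associative and commutative representation if and only if char K ≠ 2.) -/

import Mathlib

/-- A witness of a faithful associative and commutative representation of the
two-dimensional evolution algebra with natural basis `e₁, e₂` (`e₁e₂ = e₂e₁ = 0`)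
and structure constants `eᵢ² = w₁ᵢe₁ + w₂ᵢe₂`: scalars `λ₀,λ₁,λ₂,λ₃ ∈ K`, a commutative
associative (not necessarily unital) `K`-algebra `B` with a `K`-linear involution `s`,
and `K`-linearly independent `u, v ∈ B` (the images of `e₁, e₂`) satisfying the four
relations imposed by `p(a,b) = λ₀ab + λ₁a·b* + λ₂a*·b + λ₃a*·b*`. -/
structure EvoRepWitness (K : Type) [Field K] (w11 w21 w12 w22 : K) : Type 1 where
  B : Type
  [ringB : NonUnitalCommRing B]
  [modB : Module K B]
  [smulB : SMulCommClass K B B]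
  [towerB : IsScalarTower K B B]
  l0 : K
  l1 : K
  l2 : K
  l3 : K
  s : B →ₗ[K] B
  hsmul : ∀ x y : B, s (x * y) = s x * s y
  hsinv : ∀ x : B, s (s x) = x
  u : B
  v : B
  indep : LinearIndependent K ![u, v]
  huu : l0 • (u * u) + l1 • (u * s u) + l2 • (s u * u) + l3 • (s u * s u)
      = w11 • u + w21 • v
  hvv : l0 • (v * v) + l1 • (v * s v) + l2 • (s v * v) + l3 • (s v * s v)
      = w12 • u + w22 • v
  huv : l0 • (u * v) + l1 • (u * s v) + l2 • (s u * v) + l3 • (s u * s v) = 0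
  hvu : l0 • (v * u) + l1 • (v * s u) + l2 • (s v * u) + l3 • (s v * s u) = 0


@[ext] structure MyC (K : Type) (α : K) : Type where
  x : K
  y : K

namespace MyC
variable {K : Type} [Field K] {α : K}

instance : Add (MyC K α) := ⟨fun a b => ⟨a.x + b.x, a.y + b.y⟩⟩
instance : Neg (MyC K α) := ⟨fun a => ⟨-a.x, -a.y⟩⟩
instance : Zero (MyC K α) := ⟨⟨0, 0⟩⟩
instance : Mul (MyC K α) := ⟨fun a b => ⟨a.x * b.x - α * (a.y * b.y), a.x * b.y + a.y * b.x⟩⟩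
instance : SMul K (MyC K α) := ⟨fun k a => ⟨k * a.x, k * a.y⟩⟩

@[simp] lemma add_x (a b : MyC K α) : (a + b).x = a.x + b.x := rfl
@[simp] lemma add_y (a b : MyC K α) : (a + b).y = a.y + b.y := rfl
@[simp] lemma neg_x (a : MyC K α) : (-a).x = -a.x := rfl
@[simp] lemma neg_y (a : MyC K α) : (-a).y = -a.y := rfl
@[simp] lemma zero_x : (0 : MyC K α).x = 0 := rfl
@[simp] lemma zero_y : (0 : MyC K α).y = 0 := rfl
@[simp] lemma mul_x (a b : MyC K α) : (a * b).x = a.x * b.x - α * (a.y * b.y) := rfl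
@[simp] lemma mul_y (a b : MyC K α) : (a * b).y = a.x * b.y + a.y * b.x := rfl
@[simp] lemma smul_x (k : K) (a : MyC K α) : (k • a).x = k * a.x := rfl
@[simp] lemma smul_y (k : K) (a : MyC K α) : (k • a).y = k * a.y := rfl

instance : NonUnitalCommRing (MyC K α) where
  add_assoc a b c := by ext <;> simp <;> ring
  zero_add a := by ext <;> simp
  add_zero a := by ext <;> simp
  add_comm a b := by ext <;> simp <;> ring
  neg_add_cancel a := by ext <;> simp
  left_distrib a b c := by ext <;> simp <;> ring
  right_distrib a b c := by ext <;> simp <;> ring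
  zero_mul a := by ext <;> simp
  mul_zero a := by ext <;> simp
  mul_assoc a b c := by ext <;> simp <;> ring
  mul_comm a b := by ext <;> simp <;> ring
  nsmul := fun n a => ⟨n * a.x, n * a.y⟩
  nsmul_zero a := by ext <;> (show ((0:ℕ):K) * _ = 0; simp)
  nsmul_succ n a := by ext <;> (show ((n+1:ℕ):K) * _ = (n:K) * _ + _; push_cast; ring)
  zsmul := fun n a => ⟨n * a.x, n * a.y⟩
  zsmul_zero' a := by ext <;> (show ((0:ℤ):K) * _ = 0; simp)
  zsmul_succ' n a := by ext <;> (show ((Int.ofNat (n+1):ℤ):K) * _ = ((Int.ofNat n:ℤ):K) * _ + _; simp [add_mul])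
  zsmul_neg' n a := by ext <;> (show ((Int.negSucc n:ℤ):K) * _ = -(((Int.ofNat (n+1):ℤ):K) * _); simp [Int.cast_negSucc, add_mul])

instance : Module K (MyC K α) where
  one_smul a := by ext <;> simp
  mul_smul k l a := by ext <;> simp <;> ring
  smul_zero k := by ext <;> simp
  smul_add k a b := by ext <;> simp <;> ring
  add_smul k l a := by ext <;> simp <;> ring
  zero_smul a := by ext <;> simp

instance : SMulCommClass K (MyC K α) (MyC K α) :=
  ⟨fun k a b => by ext <;> simp <;> ring⟩

instance : IsScalarTower K (MyC K α) (MyC K α) :=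
  ⟨fun k a b => by ext <;> simp <;> ring⟩

def conj (K : Type) [Field K] (α : K) : MyC K α →ₗ[K] MyC K α where
  toFun a := ⟨a.x, -a.y⟩
  map_add' a b := by ext <;> simp <;> ring
  map_smul' k a := by ext <;> simp <;> ring

@[simp] lemma conj_x (a : MyC K α) : (conj K α a).x = a.x := rfl
@[simp] lemma conj_y (a : MyC K α) : (conj K α a).y = -a.y := rfl

end MyC

noncomputable def myWitness (K : Type) [Field K] (α : K) (h2 : (2:K) ≠ 0) :
    EvoRepWitness K 1 0 α 0 where
  B := MyC K α
  l0 := 0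
  l1 := (2:K)⁻¹
  l2 := (2:K)⁻¹
  l3 := 0
  s := MyC.conj K α
  hsmul x y := by ext <;> simp <;> ring
  hsinv x := by ext <;> simp
  u := ⟨1, 0⟩
  v := ⟨0, 1⟩
  indep := by
    rw [linearIndependent_fin2]
    constructor
    · intro h
      have := congrArg MyC.y h
      simp at this
    · intro a h
      have := congrArg MyC.x h
      simp at this
  huu := by ext <;> simp <;> field_simp <;> norm_num
  hvv := by ext <;> simp <;> field_simp <;> ring
  huv := by ext <;> simp <;> ring
  hvu := by ext <;> simp <;> ring

section Char2

variable {R : Type} [CommRing R]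

/-- Final contradiction step, common to two branches (after showing `a' = -a`). -/
lemma ending (p0 p1 p2 p3 A a b b' : R) (hch : (2:R) = 0) (ha : a ≠ 0)
    (hAc : ∀ z : R, A * z = 0 → z = 0)
    (hk : (p0 + p1 + p2 + p3) * (a * a) = a)
    (h3e : (p0 - p2) * (a * b) + (p1 - p3) * (a * b') = 0)
    (hs : a * b + a * b' = 0)
    (h2 : p0 * (b * b) + p1 * (b * b') + p2 * (b' * b) + p3 * (b' * b') = A * a) :
    False := by
  have h5 : (p0 + p1 + p2 + p3) * (a * b) = 0 := by
    linear_combination h3e + (p3 - p1) * hs + ((p1 + p2) * (a * b)) * hch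
  have hab : a * b = 0 := by linear_combination a * h5 - b * hk
  have hab1 : a * b' = 0 := by linear_combination hs - hab
  have h6 : A * (a * a) = 0 := by
    linear_combination (-a) * h2 + (p0 * b + p1 * b' + p2 * b') * hab + (p3 * b') * hab1
  have haa : a * a = 0 := hAc _ h6
  exact ha (by linear_combination (p0 + p1 + p2 + p3) * haa - hk)

/-- Case `l0 + l3 ≠ 0`, `l1 = l2`: derives the key linear relation. -/
lemma caseII (p0 p1 p3 A a a' b b' : R) (hch : (2:R) = 0)
    (hNc : ∀ z : R, (p0 + p3) * z = 0 → z = 0)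
    (hAc : ∀ z : R, A * z = 0 → z = 0)
    (h1 : p0 * (a * a) + p1 * (a * a') + p1 * (a' * a) + p3 * (a' * a') = a)
    (h1s : p0 * (a' * a') + p1 * (a' * a) + p1 * (a * a') + p3 * (a * a) = a')
    (h2 : p0 * (b * b) + p1 * (b * b') + p1 * (b' * b) + p3 * (b' * b') = A * a)
    (h2s : p0 * (b' * b') + p1 * (b' * b) + p1 * (b * b') + p3 * (b * b) = A * a')
    (h3 : p0 * (a * b) + p1 * (a * b') + p1 * (a' * b) + p3 * (a' * b') = 0)
    (h3s : p0 * (a' * b') + p1 * (a' * b) + p1 * (a * b') + p3 * (a * b) = 0) :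
    (p0 ^ 2 + p0 * p3 + p3 ^ 2) * a + (p0 * p3) * a' = 0 := by
  have hD : (p0 + p3) * (a * b + a' * b') = 0 := by
    linear_combination h3 + h3s - (p1 * (a * b') + p1 * (a' * b)) * hch
  have hP : a * b + a' * b' = 0 := hNc _ hD
  have hF1 : (p0 + p3) ^ 2 * (a * a) = p0 * a + p3 * a' := by
    linear_combination p0 * h1 + p3 * h1s +
      (p0 * p3 * (a * a) - p0 * p3 * (a' * a') - p0 * p1 * (a * a') - p1 * p3 * (a * a')) * hch
  have hF1' : (p0 + p3) ^ 2 * (a' * a') = p3 * a + p0 * a' := by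
    linear_combination p3 * h1 + p0 * h1s +
      (-(p0 * p3 * (a * a)) + p0 * p3 * (a' * a') - p0 * p1 * (a * a') - p1 * p3 * (a * a')) * hch
  have hb2 : (p0 + p3) * ((p0 + p3) * (b * b - A * (a * a))) = 0 := by
    linear_combination p0 * h2 + p3 * h2s - A * hF1 +
      (p0 * p3 * (b * b) - p0 * p3 * (b' * b') - p0 * p1 * (b * b') - p1 * p3 * (b * b')) * hch
  have hbb : b * b = A * (a * a) := by
    have := hNc _ (hNc _ hb2); linear_combination this
  have hb2' : (p0 + p3) * ((p0 + p3) * (b' * b' - A * (a' * a'))) = 0 := by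
    linear_combination p3 * h2 + p0 * h2s - A * hF1' +
      (-(p0 * p3 * (b * b)) + p0 * p3 * (b' * b') - p0 * p1 * (b * b') - p1 * p3 * (b * b')) * hch
  have hbb' : b' * b' = A * (a' * a') := by
    have := hNc _ (hNc _ hb2'); linear_combination this
  have hE3 : (p0 + p3) * (a * b) + p1 * (a * b') + p1 * (a' * b) = 0 := by
    linear_combination h3 - p3 * hP + (p3 * (a * b)) * hch
  have ha4 : (p0 + p3) * ((p0 + p3) * (A * ((a * a) * (a * a)))) = 0 := by
    linear_combination ((p0 + p3) * (a * b) + p1 * (a * b') + p1 * (a' * b)) * hE3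
      - ((p0 + p3) ^ 2 * (a * a) + p1 ^ 2 * (a' * a')) * hbb - (p1 ^ 2 * (a * a)) * hbb'
      - (A * p1 ^ 2 * ((a * a) * (a' * a')) + p0 * p1 * ((a * a) * (b * b'))
         + p0 * p1 * ((a * a') * (b * b)) + p1 ^ 2 * ((a * a') * (b * b'))
         + p1 * p3 * ((a * a) * (b * b')) + p1 * p3 * ((a * a') * (b * b))) * hch
  have haa4 : (a * a) * (a * a) = 0 := hAc _ (hNc _ (hNc _ ha4))
  have hF3 : p0 ^ 2 * (a * a) + p3 ^ 2 * (a' * a') = 0 := by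
    linear_combination ((p0 + p3) ^ 2) ^ 2 * haa4
      - ((p0 + p3) ^ 2 * (a * a) + p0 * a + p3 * a') * hF1 - (p0 * p3 * (a * a')) * hch
  have hsum : (p0 + p3) ^ 2 * (a * a + a' * a') = (p0 + p3) * (a + a') := by
    linear_combination hF1 + hF1'
  have hG0 : (p0 + p3) * ((p0 + p3) * (p0 * a + p3 * a') - p3 ^ 2 * (a + a')) = 0 := by
    linear_combination (-((p0 + p3) ^ 2)) * hF1 + (p3 ^ 2) * hsum - ((p0 + p3) ^ 2) * hF3
      + ((p0 ^ 4 + 3 * p0 ^ 3 * p3 + 3 * p0 ^ 2 * p3 ^ 2 + p0 * p3 ^ 3) * (a * a)) * hch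
  have hG1 := hNc _ hG0
  linear_combination hG1 + (p3 ^ 2 * a) * hch

end Char2

section Key

variable {K : Type} [Field K] {R : Type} [CommRing R] [Algebra K R]

lemma cancelK (k : K) (hk : k ≠ 0) (z : R) (h : algebraMap K R k * z = 0) : z = 0 := by
  have h2 : algebraMap K R k⁻¹ * (algebraMap K R k * z) = 0 := by rw [h, mul_zero]
  rwa [← mul_assoc, ← map_mul, inv_mul_cancel₀ hk, map_one, one_mul] at h2

lemma key (l0 l1 l2 l3 α : K) (a a' b b' : R)
    (h2K : (2:K) = 0) (hα : α ≠ 0) (ha : a ≠ 0)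
    (E1 : algebraMap K R l0 * (a * a) + algebraMap K R l1 * (a * a')
        + algebraMap K R l2 * (a' * a) + algebraMap K R l3 * (a' * a') = a)
    (E1s : algebraMap K R l0 * (a' * a') + algebraMap K R l1 * (a' * a)
        + algebraMap K R l2 * (a * a') + algebraMap K R l3 * (a * a) = a')
    (E2 : algebraMap K R l0 * (b * b) + algebraMap K R l1 * (b * b')
        + algebraMap K R l2 * (b' * b) + algebraMap K R l3 * (b' * b') = algebraMap K R α * a)
    (E2s : algebraMap K R l0 * (b' * b') + algebraMap K R l1 * (b' * b)
        + algebraMap K R l2 * (b * b') + algebraMap K R l3 * (b * b) = algebraMap K R α * a')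
    (E3 : algebraMap K R l0 * (a * b) + algebraMap K R l1 * (a * b')
        + algebraMap K R l2 * (a' * b) + algebraMap K R l3 * (a' * b') = 0)
    (E3s : algebraMap K R l0 * (a' * b') + algebraMap K R l1 * (a' * b)
        + algebraMap K R l2 * (a * b') + algebraMap K R l3 * (a * b) = 0)
    (E4 : algebraMap K R l0 * (b * a) + algebraMap K R l1 * (b * a')
        + algebraMap K R l2 * (b' * a) + algebraMap K R l3 * (b' * a') = 0) :
    False := by
  set f := algebraMap K R with hf
  have hch : (2:R) = 0 := by
    have := congrArg f h2K
    rwa [map_ofNat, map_zero] at this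
  have hAc : ∀ z : R, f α * z = 0 → z = 0 := fun z h => cancelK α hα z h
  by_cases hν : l0 + l3 = 0
  · -- ν = 0
    have hν0R : f l0 + f l3 = 0 := by rw [← map_add, hν, map_zero]
    have hA : (f l0 + f l3) * ((a + a') * (a + a')) = a + a' := by
      linear_combination E1 + E1s + ((f l0 - f l1 - f l2 + f l3) * (a * a')) * hch
    have hC : a + a' = 0 := by
      linear_combination ((a + a') * (a + a')) * hν0R - hA
    have ha' : a' = -a := by linear_combination hC
    rw [ha'] at E1 E3 E4
    have hk : (f l0 + f l1 + f l2 + f l3) * (a * a) = a := by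
      linear_combination E1 + ((f l1 + f l2) * (a * a)) * hch
    have h34 : (f l1 + f l2) * (a * b + a * b') = 0 := by
      linear_combination E3 - E4 + (f l2 * (a * b) + f l2 * (a * b')) * hch
    have hs : a * b + a * b' = 0 := by
      linear_combination a * h34 + (a * (a * b + a * b')) * hν0R - (b + b') * hk
    exact ending (f l0) (f l1) (f l2) (f l3) (f α) a b b' hch ha hAc hk
      (by linear_combination E3) hs E2
  · have hNc : ∀ z : R, (f l0 + f l3) * z = 0 → z = 0 := by
      intro z h
      exact cancelK (l0 + l3) hν z (by rw [map_add]; exact h)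
    by_cases hμ : l1 + l2 = 0
    · -- case II : l2 = l1
      have hl2 : l2 = l1 := by linear_combination hμ - l1 * h2K
      rw [hl2] at E1 E1s E2 E2s E3 E3s
      have hG := caseII (f l0) (f l1) (f l3) (f α) a a' b b' hch hNc hAc
        E1 E1s E2 E2s E3 E3s
      have hGs := caseII (f l0) (f l1) (f l3) (f α) a' a b' b hch hNc hAc
        (by linear_combination E1s) (by linear_combination E1)
        (by linear_combination E2s) (by linear_combination E2)
        (by linear_combination E3s) (by linear_combination E3)
      have hfin : ((f l0 ^ 2 + f l3 ^ 2) * ((f l0 + f l3) ^ 2)) * a = 0 := by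
        linear_combination (f l0 ^ 2 + f l0 * f l3 + f l3 ^ 2) * hG - (f l0 * f l3) * hGs
      have hsq : l0 ^ 2 + l3 ^ 2 = (l0 + l3) ^ 2 := by
        linear_combination (-(l0 * l3)) * h2K
      have hk0 : (l0 ^ 2 + l3 ^ 2) * ((l0 + l3) ^ 2) ≠ 0 := by
        rw [hsq]
        exact mul_ne_zero (pow_ne_zero _ hν) (pow_ne_zero _ hν)
      refine ha (cancelK _ hk0 a ?_)
      rw [map_mul, map_add, map_pow, map_pow, map_pow, map_add]
      linear_combination hfin
    · -- ν ≠ 0, μ ≠ 0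
      have hq : (f l1 + f l2) * (a * b' + a' * b) = 0 := by
        linear_combination E3 + E4 - (f l0 * (a * b) + f l3 * (a' * b')) * hch
      have hQ : a * b' + a' * b = 0 :=
        cancelK (l1 + l2) hμ _ (by rw [map_add]; linear_combination hq)
      have hD : (f l0 + f l3) * (a * b + a' * b') = 0 := by
        linear_combination E3 + E3s - (f l1 + f l2) * hQ
      have hP : a * b + a' * b' = 0 := hNc _ hD
      have hA : (f l0 + f l3) * ((a + a') * (a + a')) = a + a' := by
        linear_combination E1 + E1s + ((f l0 - f l1 - f l2 + f l3) * (a * a')) * hch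
      have hB : (f l0 + f l3) * ((b + b') * (b + b')) = f α * (a + a') := by
        linear_combination E2 + E2s + ((f l0 - f l1 - f l2 + f l3) * (b * b')) * hch
      have hcc : f α * ((a + a') * (a + a')) = 0 := by
        linear_combination (-(a + a')) * hB + ((f l0 + f l3) * (b + b')) * hP
          + ((f l0 + f l3) * (b + b')) * hQ
      have hC2 : (a + a') * (a + a') = 0 := hAc _ hcc
      have hC : a + a' = 0 := by linear_combination (f l0 + f l3) * hC2 - hA
      have ha' : a' = -a := by linear_combination hC
      rw [ha'] at E1 E3 hQ
      have hk : (f l0 + f l1 + f l2 + f l3) * (a * a) = a := by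
        linear_combination E1 + ((f l1 + f l2) * (a * a)) * hch
      have hs : a * b + a * b' = 0 := by
        linear_combination hQ + (a * b) * hch
      exact ending (f l0) (f l1) (f l2) (f l3) (f α) a b b' hch ha hAc hk
        (by linear_combination E3) hs E2

end Key
/-- The evolution algebra `A_{8,α}` (`e₁² = e₁`, `e₂² = αe₁`,
`e₁e₂ = 0`, `α ≠ 0`) has a faithful associative and commutative representation
if and only if `char K ≠ 2`. -/
theorem stmt8 (K : Type) [Field K] (α : K) (hα : α ≠ 0) :
    Nonempty (EvoRepWitness K 1 0 α 0) ↔ ringChar K ≠ 2 := by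
  
  constructor
  · rintro ⟨W⟩ hc
    letI := W.ringB; letI := W.modB; letI := W.smulB; letI := W.towerB
    have h2K : (2:K) = 0 := by
      have := ringChar.Nat.cast_ringChar (R := K)
      rw [hc] at this
      exact_mod_cast this
    set R := Unitization K W.B with hR
    have inj : Function.Injective ((↑·) : W.B → R) := Unitization.inr_injective
    have hu0 : W.u ≠ 0 := by
      have := W.indep.ne_zero 0
      simpa using this
    have ha : ((W.u : R)) ≠ 0 := by
      intro h
      exact hu0 (inj (by simpa using h))
    have e1B := W.huu
    rw [one_smul, zero_smul, add_zero] at e1B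
    have e2B := W.hvv
    rw [zero_smul, add_zero] at e2B
    have e3B := W.huv
    have e4B := W.hvu
    have e1sB := congrArg W.s e1B
    simp only [map_add, map_smul, W.hsmul, W.hsinv] at e1sB
    have e2sB := congrArg W.s e2B
    simp only [map_add, map_smul, W.hsmul, W.hsinv] at e2sB
    have e3sB := congrArg W.s e3B
    simp only [map_add, map_smul, W.hsmul, W.hsinv, map_zero] at e3sB
    have push : ∀ x y : W.B, x = y → ((x : R)) = ((y : R)) := fun x y h => congrArg _ h
    have E1 := push _ _ e1B
    have E1s := push _ _ e1sB
    have E2 := push _ _ e2B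
    have E2s := push _ _ e2sB
    have E3 := push _ _ e3B
    have E3s := push _ _ e3sB
    have E4 := push _ _ e4B
    simp only [Unitization.inr_add, Unitization.inr_smul, Unitization.inr_mul,
      Unitization.inr_zero, Algebra.smul_def] at E1 E1s E2 E2s E3 E3s E4
    exact key W.l0 W.l1 W.l2 W.l3 α (W.u : R) (W.s W.u : R) (W.v : R) (W.s W.v : R)
      h2K hα ha E1 E1s E2 E2s E3 E3s E4
  · intro h
    exact ⟨myWitness K α (Ring.two_ne_zero h)⟩
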